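/- Let α > −1/4, β = √(1+4α), φ₀(R) = β·R^{(β+1)/2}(1−R^{2β})/(1+R^{2β})^{3/2}, and U(R) = 10·W_α(R)⁴ + 20·R·W_α(R)³·W_α'(R). Then the function R ↦ U(R)·φ₀(R)² is integrable on (0,∞) and ∫₀^∞ U(R)·φ₀(R)² dR = 0. -/

import Mathlib

open MeasureTheory

noncomputable def betaOf (α : ℝ) : ℝ := Real.sqrt (1 + 4 * α)

/-- The ground state soliton `W_α(R) = (3β²)^(1/4) (R^(β-1)/(1+R^(2β)))^(1/2)`. -/
noncomputable def Walpha (α : ℝ) (R : ℝ) : ℝ :=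
  (3 * betaOf α ^ 2) ^ ((1 : ℝ) / 4) *
    (R ^ (betaOf α - 1) / (1 + R ^ (2 * betaOf α))) ^ ((1 : ℝ) / 2)

/-- `φ₀(R) = β R^((β+1)/2) (1-R^(2β)) / (1+R^(2β))^(3/2)`. -/
noncomputable def phi0 (α : ℝ) (R : ℝ) : ℝ :=
  betaOf α * R ^ ((betaOf α + 1) / 2) * (1 - R ^ (2 * betaOf α)) /
    (1 + R ^ (2 * betaOf α)) ^ ((3 : ℝ) / 2)

/-- `U(R) = 10 W_α(R)⁴ + 20 R W_α(R)³ W_α'(R)`. -/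
noncomputable def Ufun (α : ℝ) (R : ℝ) : ℝ :=
  10 * (Walpha α R) ^ 4 + 20 * R * (Walpha α R) ^ 3 * deriv (Walpha α) R

namespace ZeroIntegralAux

open Set Filter Real Topology

section helpers

variable {α R : ℝ}

lemma two_mul_rpow {β R : ℝ} (hR : 0 < R) : R ^ (2 * β) = (R ^ β) ^ 2 := by
  rw [mul_comm, Real.rpow_mul hR.le, show ((2:ℝ)) = ((2:ℕ):ℝ) by norm_num,
    Real.rpow_natCast]

lemma Walpha_eq (hR : 0 < (R:ℝ)) :
    Walpha α R = (3 * betaOf α ^ 2) ^ ((1 : ℝ) / 4) *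
      (R ^ ((betaOf α - 1)/2) * (1 + (R ^ betaOf α) ^ 2) ^ (-(1 : ℝ) / 2)) := by
  set β := betaOf α
  have hx : (0:ℝ) < 1 + R ^ (2*β) := by positivity
  have h1 : (R ^ (β-1)) ^ ((1:ℝ)/2) = R ^ ((β-1)/2) := by
    rw [← Real.rpow_mul hR.le]; ring_nf
  rw [Walpha, Real.div_rpow (Real.rpow_nonneg hR.le _) hx.le, h1, two_mul_rpow hR,
    neg_div, Real.rpow_neg (by positivity : (0:ℝ) ≤ 1 + (R ^ β)^2)]
  ring

lemma hasDerivAt_Walpha (hR : 0 < (R:ℝ)) :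
    HasDerivAt (Walpha α)
      ((3 * betaOf α ^ 2) ^ ((1 : ℝ) / 4) *
        ((betaOf α - 1)/2 * R ^ ((betaOf α - 1)/2 - 1) *
            (1 + (R ^ betaOf α) ^ 2) ^ (-(1 : ℝ) / 2) +
          R ^ ((betaOf α - 1)/2) *
            ((-(1 : ℝ) / 2) * (1 + (R ^ betaOf α) ^ 2) ^ (-(1 : ℝ) / 2 - 1) *
              (2 * betaOf α * R ^ (2 * betaOf α - 1))))) R := by
  set β := betaOf α with hβdef
  have h1 : HasDerivAt (fun y : ℝ => y ^ ((β - 1)/2))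
      ((β - 1)/2 * R ^ ((β - 1)/2 - 1)) R :=
    Real.hasDerivAt_rpow_const (Or.inl hR.ne')
  have h2 : HasDerivAt (fun y : ℝ => 1 + (y ^ β) ^ 2) (2 * β * R ^ (2 * β - 1)) R := by
    have : HasDerivAt (fun y : ℝ => y ^ (2*β)) (2 * β * R ^ (2 * β - 1)) R :=
      Real.hasDerivAt_rpow_const (Or.inl hR.ne')
    have h := this.const_add 1
    refine h.congr_of_eventuallyEq ?_
    filter_upwards [eventually_gt_nhds hR] with y hy
    rw [two_mul_rpow hy]
  have h3 := h2.rpow_const (p := -(1:ℝ)/2) (Or.inl (by positivity : (1:ℝ) + (R ^ β)^2 ≠ 0))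
  have h4 := ((h1.mul h3).const_mul ((3 * β ^ 2) ^ ((1 : ℝ) / 4)))
  have h5 : HasDerivAt
      (fun y : ℝ => (3 * β ^ 2) ^ ((1:ℝ)/4) *
        (y ^ ((β - 1)/2) * (1 + (y ^ β) ^ 2) ^ (-(1 : ℝ) / 2)))
      ((3 * β ^ 2) ^ ((1 : ℝ) / 4) *
        ((β - 1)/2 * R ^ ((β - 1)/2 - 1) * (1 + (R ^ β) ^ 2) ^ (-(1 : ℝ) / 2) +
          R ^ ((β - 1)/2) *
            ((-(1 : ℝ) / 2) * (1 + (R ^ β) ^ 2) ^ (-(1 : ℝ) / 2 - 1) *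
              (2 * β * R ^ (2 * β - 1))))) R := by
    refine h4.congr_deriv ?_
    ring
  refine h5.congr_of_eventuallyEq ?_
  filter_upwards [eventually_gt_nhds hR] with y hy
  exact Walpha_eq hy

end helpers

section identity
variable {α R : ℝ}

lemma integrand_eq (hβ : 0 < betaOf α) (hR : 0 < R) :
    Ufun α R * phi0 α R ^ 2 =
      30 * betaOf α ^ 5 * (R ^ betaOf α) ^ 3 * (1 - (R ^ betaOf α) ^ 2) ^ 3 /
        (R * (1 + (R ^ betaOf α) ^ 2) ^ 6) := by
  set β := betaOf α with hβdef
  set c : ℝ := (3 * β ^ 2) ^ ((1:ℝ)/4) with hcdef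
  set t : ℝ := R ^ β with htdef
  set s : ℝ := R ^ ((β - 1)/2) with hsdef
  set u : ℝ := (1 + t ^ 2) ^ (-(1:ℝ)/2) with hudef
  have htpos : 0 < t := Real.rpow_pos_of_pos hR β
  have hxpos : (0:ℝ) < 1 + t ^ 2 := by positivity
  have hW : Walpha α R = c * (s * u) := Walpha_eq hR
  have hc4 : c ^ 4 = 3 * β ^ 2 := by
    rw [hcdef, ← Real.rpow_natCast ((3 * β ^ 2) ^ ((1:ℝ)/4)) 4,
      ← Real.rpow_mul (by positivity)]
    norm_num
  have hs2 : s ^ 2 = t / R := by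
    have h : ((β - 1)/2) * ((2:ℕ):ℝ) = β - 1 := by push_cast; ring
    rw [hsdef, ← Real.rpow_natCast (R ^ ((β - 1)/2)) 2, ← Real.rpow_mul hR.le, h,
      Real.rpow_sub hR, Real.rpow_one]
  have hu2 : u ^ 2 = (1 + t ^ 2)⁻¹ := by
    have h : (-(1:ℝ)/2) * ((2:ℕ):ℝ) = -1 := by push_cast; ring
    rw [hudef, ← Real.rpow_natCast ((1 + t ^ 2) ^ (-(1:ℝ)/2)) 2,
      ← Real.rpow_mul hxpos.le, h, Real.rpow_neg_one]
  have hs4 : s ^ 4 = (t / R) ^ 2 := by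
    rw [show s ^ 4 = (s ^ 2) ^ 2 by ring, hs2]
  have hu4 : u ^ 4 = ((1 + t ^ 2) ^ 2)⁻¹ := by
    rw [show u ^ 4 = (u ^ 2) ^ 2 by ring, hu2, inv_pow]
  have hderiv : deriv (Walpha α) R
      = c * (s * u) * ((β - 1)/(2*R) - β * t ^ 2 / (R * (1 + t ^ 2))) := by
    rw [(hasDerivAt_Walpha hR).deriv]
    have e1 : R ^ ((β - 1)/2 - 1) = s / R := by
      rw [Real.rpow_sub hR, Real.rpow_one, hsdef]
    have e2 : R ^ (2 * β - 1) = t ^ 2 / R := by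
      rw [Real.rpow_sub hR, Real.rpow_one, two_mul_rpow hR, htdef]
    have e3 : (1 + t ^ 2 : ℝ) ^ (-(1:ℝ)/2 - 1) = u * (1 + t ^ 2)⁻¹ := by
      rw [Real.rpow_sub hxpos, Real.rpow_one, hudef]
      exact div_eq_mul_inv _ _
    rw [e1, e2, e3]
    simp only [← hβdef, ← hcdef, ← htdef, ← hsdef, ← hudef]
    field_simp
    try ring
  have hW4 : Walpha α R ^ 4 = 3 * β ^ 2 * t ^ 2 / (R ^ 2 * (1 + t ^ 2) ^ 2) := by
    rw [hW, show (c * (s * u)) ^ 4 = c ^ 4 * (s ^ 4 * u ^ 4) by ring, hc4, hs4, hu4]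
    field_simp
    try ring
  have e5 : ((1 + t ^ 2 : ℝ) ^ ((3:ℝ)/2)) ^ 2 = (1 + t ^ 2) ^ 3 := by
    have h : ((3:ℝ)/2) * ((2:ℕ):ℝ) = ((3:ℕ):ℝ) := by push_cast; ring
    rw [← Real.rpow_natCast ((1 + t ^ 2 : ℝ) ^ ((3:ℝ)/2)) 2, ← Real.rpow_mul hxpos.le,
      h, Real.rpow_natCast]
  have e4 : R ^ ((β + 1)/2) = s * R := by
    rw [show (β + 1)/2 = (β - 1)/2 + 1 by ring, Real.rpow_add hR, Real.rpow_one, hsdef]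
  have hphisq : phi0 α R ^ 2 = β ^ 2 * (t * R) * (1 - t ^ 2) ^ 2 / (1 + t ^ 2) ^ 3 := by
    rw [phi0, two_mul_rpow hR, ← hβdef, ← htdef, e4, div_pow, e5,
      show (β * (s * R) * (1 - t ^ 2)) ^ 2 = β ^ 2 * (s ^ 2 * R ^ 2) * (1 - t ^ 2) ^ 2
        by ring, hs2]
    field_simp
    try ring
  have hUf : Ufun α R
      = (10 + 20 * R * ((β - 1)/(2*R) - β * t ^ 2 / (R * (1 + t ^ 2))))
          * Walpha α R ^ 4 := by
    rw [Ufun, hderiv, ← hW]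
    ring
  rw [hUf, hW4, hphisq]
  field_simp
  ring

end identity

noncomputable def Afun (β : ℝ) (R : ℝ) : ℝ :=
  β ^ 4 * (10 * (R ^ β) ^ 3 - 4 * (R ^ β) ^ 5 + 10 * (R ^ β) ^ 7) / (1 + (R ^ β) ^ 2) ^ 5

noncomputable def Gfun (β : ℝ) (R : ℝ) : ℝ :=
  30 * β ^ 5 * (R ^ β) ^ 3 * (1 - (R ^ β) ^ 2) ^ 3 / (R * (1 + (R ^ β) ^ 2) ^ 6)

lemma hasDerivAt_Afun {β R : ℝ} (hR : 0 < R) :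
    HasDerivAt (Afun β) (Gfun β R) R := by
  set t := R ^ β with htdef
  have ht : HasDerivAt (fun y : ℝ => y ^ β) (β * R ^ (β - 1)) R :=
    Real.hasDerivAt_rpow_const (Or.inl hR.ne')
  have h1 : HasDerivAt (fun y : ℝ => β ^ 4 * (10 * y ^ 3 - 4 * y ^ 5 + 10 * y ^ 7))
      (β ^ 4 * (30 * t ^ 2 - 20 * t ^ 4 + 70 * t ^ 6)) t := by
    have h := ((((hasDerivAt_pow 3 t).const_mul (10:ℝ)).sub
      ((hasDerivAt_pow 5 t).const_mul (4:ℝ))).add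
      ((hasDerivAt_pow 7 t).const_mul (10:ℝ))).const_mul (β ^ 4)
    refine h.congr_deriv ?_
    push_cast
    ring
  have h2 : HasDerivAt (fun y : ℝ => (1 + y ^ 2) ^ 5) (5 * (1 + t ^ 2) ^ 4 * (2 * t)) t := by
    have h := ((hasDerivAt_pow 2 t).const_add (1:ℝ)).pow 5
    refine h.congr_deriv ?_
    push_cast
    ring
  have hF := h1.div h2 (by positivity)
  have hcomp := hF.comp R ht
  have hq : Afun β = (fun y : ℝ => β ^ 4 * (10 * y ^ 3 - 4 * y ^ 5 + 10 * y ^ 7) /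
      (1 + y ^ 2) ^ 5) ∘ (fun y : ℝ => y ^ β) := rfl
  rw [hq]
  refine hcomp.congr_deriv (Eq.symm ?_)
  rw [Gfun, Real.rpow_sub hR, Real.rpow_one, ← htdef]
  have hx : (0:ℝ) < 1 + t ^ 2 := by positivity
  field_simp
  ring

lemma tendsto_Afun {β : ℝ} (hβ : 0 < β) : Tendsto (Afun β) atTop (𝓝 0) := by
  apply squeeze_zero_norm' (a := fun R : ℝ => 24 * β ^ 4 * R ^ (-(3 * β)))
  · filter_upwards [eventually_ge_atTop (1:ℝ)] with R hR1
    have hR : (0:ℝ) < R := lt_of_lt_of_le one_pos hR1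
    set t := R ^ β with htdef
    have ht1 : 1 ≤ t := Real.one_le_rpow hR1 hβ.le
    have htpos : 0 < t := lt_of_lt_of_le one_pos ht1
    have hmt : R ^ (-(3 * β)) = (t ^ 3)⁻¹ := by
      rw [Real.rpow_neg hR.le, show 3 * β = β * ((3:ℕ):ℝ) by push_cast; ring,
        Real.rpow_mul hR.le, Real.rpow_natCast]
    have habs : |10 * t ^ 3 - 4 * t ^ 5 + 10 * t ^ 7| ≤ 24 * t ^ 7 := by
      have h37 : t ^ 3 ≤ t ^ 7 := pow_le_pow_right₀ ht1 (by norm_num)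
      have h57 : t ^ 5 ≤ t ^ 7 := pow_le_pow_right₀ ht1 (by norm_num)
      have h3 : (0:ℝ) < t ^ 3 := pow_pos htpos 3
      have h7 : (0:ℝ) < t ^ 7 := pow_pos htpos 7
      rw [abs_le]
      constructor <;> nlinarith
    calc ‖Afun β R‖ = β ^ 4 * |10 * t ^ 3 - 4 * t ^ 5 + 10 * t ^ 7| / (1 + t ^ 2) ^ 5 := by
          rw [Real.norm_eq_abs, Afun, abs_div, abs_mul,
            abs_of_nonneg (by positivity : (0:ℝ) ≤ β ^ 4),
            abs_of_nonneg (by positivity : (0:ℝ) ≤ (1 + t ^ 2) ^ 5)]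
      _ ≤ β ^ 4 * (24 * t ^ 7) / (t ^ 2) ^ 5 := by
          apply div_le_div₀ (by positivity)
            (mul_le_mul_of_nonneg_left habs (by positivity)) (by positivity)
          gcongr
          nlinarith
      _ = 24 * β ^ 4 * R ^ (-(3 * β)) := by
          rw [hmt]
          field_simp
  · have h := (tendsto_rpow_neg_atTop (by positivity : (0:ℝ) < 3 * β)).const_mul
      (24 * β ^ 4)
    simpa using h

lemma continuousWithinAt_Afun {β : ℝ} (hβ : 0 < β) :
    ContinuousWithinAt (Afun β) (Ici 0) 0 := by
  have hFc : Continuous (fun y : ℝ => β ^ 4 * (10 * y ^ 3 - 4 * y ^ 5 + 10 * y ^ 7) /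
      (1 + y ^ 2) ^ 5) := by
    apply Continuous.div (by continuity) (by continuity)
    intro y
    positivity
  have hrp : ContinuousAt (fun y : ℝ => y ^ β) 0 :=
    Real.continuousAt_rpow_const 0 β (Or.inr hβ.le)
  exact (hFc.continuousAt.comp hrp).continuousWithinAt

lemma Afun_zero {β : ℝ} (hβ : 0 < β) : Afun β 0 = 0 := by
  simp [Afun, Real.zero_rpow hβ.ne']

lemma continuousOn_Gfun {β : ℝ} : ContinuousOn (Gfun β) (Ioi 0) := by
  have hrc : ContinuousOn (fun R : ℝ => R ^ β) (Ioi 0) := fun x hx =>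
    (Real.continuousAt_rpow_const x β (Or.inl (ne_of_gt hx))).continuousWithinAt
  apply ContinuousOn.div
  · exact (continuousOn_const.mul (hrc.pow 3)).mul ((continuousOn_const.sub (hrc.pow 2)).pow 3)
  · exact continuousOn_id.mul ((continuousOn_const.add (hrc.pow 2)).pow 6)
  · intro x hx
    have hx0 : (0:ℝ) < x := hx
    positivity

lemma norm_Gfun_eq {β x : ℝ} (hx0 : 0 < x) :
    ‖Gfun β x‖ = 30 * |β| ^ 5 * (x ^ β) ^ 3 * |1 - (x ^ β) ^ 2| ^ 3 /
      (x * (1 + (x ^ β) ^ 2) ^ 6) := by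
  have ht : (0:ℝ) < x ^ β := Real.rpow_pos_of_pos hx0 β
  rw [Real.norm_eq_abs, Gfun, abs_div, abs_mul, abs_mul, abs_mul, abs_pow, abs_pow,
    abs_of_nonneg (by norm_num : (0:ℝ) ≤ (30:ℝ)), abs_of_pos ht, abs_pow,
    abs_of_pos (show (0:ℝ) < x * (1 + (x ^ β) ^ 2) ^ 6 by positivity)]

lemma integrableOn_Gfun_Ioc {β : ℝ} (hβ : 0 < β) :
    IntegrableOn (Gfun β) (Ioc 0 1) := by
  apply Integrable.mono' (g := fun R : ℝ => (30 * β ^ 5) * R ^ (3 * β - 1))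
  · exact ((intervalIntegral.intervalIntegrable_rpow' (by linarith : (-1:ℝ) < 3 * β - 1)).1).const_mul _
  · exact (continuousOn_Gfun.mono Ioc_subset_Ioi_self).aestronglyMeasurable measurableSet_Ioc
  · rw [ae_restrict_iff' measurableSet_Ioc]
    refine ae_of_all _ fun x hx => ?_
    obtain ⟨hx0, hx1⟩ := hx
    set t := x ^ β with htdef
    have htpos : 0 < t := Real.rpow_pos_of_pos hx0 β
    have ht1 : t ≤ 1 := Real.rpow_le_one hx0.le hx1 hβ.le
    have e : x ^ (3 * β - 1) = t ^ 3 / x := by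
      rw [Real.rpow_sub hx0, Real.rpow_one, show 3 * β = β * ((3:ℕ):ℝ) by push_cast; ring,
        Real.rpow_mul hx0.le, Real.rpow_natCast]
    have habs : |1 - t ^ 2| ^ 3 ≤ 1 := by
      apply pow_le_one₀ (abs_nonneg _)
      rw [abs_le]
      constructor <;> nlinarith
    calc ‖Gfun β x‖ = 30 * |β| ^ 5 * t ^ 3 * |1 - t ^ 2| ^ 3 / (x * (1 + t ^ 2) ^ 6) :=
          norm_Gfun_eq hx0
      _ ≤ 30 * β ^ 5 * t ^ 3 * 1 / (x * 1) := by
          rw [abs_of_pos hβ]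
          apply div_le_div₀ (by positivity)
            (mul_le_mul_of_nonneg_left habs (by positivity)) (by positivity)
          have : (1:ℝ) ≤ (1 + t ^ 2) ^ 6 := one_le_pow₀ (by nlinarith)
          nlinarith [mul_le_mul_of_nonneg_left this hx0.le]
      _ = 30 * β ^ 5 * x ^ (3 * β - 1) := by rw [e]; field_simp; try ring

lemma integrableOn_Gfun_Ioi {β : ℝ} (hβ : 0 < β) :
    IntegrableOn (Gfun β) (Ioi 1) := by
  apply Integrable.mono' (g := fun R : ℝ => (30 * β ^ 5) * R ^ (-(3 * β) - 1))
  · exact (integrableOn_Ioi_rpow_of_lt (by linarith) one_pos).const_mul _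
  · exact (continuousOn_Gfun.mono (fun x hx => Set.mem_Ioi.2 (lt_trans one_pos (Set.mem_Ioi.1 hx)) : Ioi (1:ℝ) ⊆ Ioi 0)).aestronglyMeasurable
      measurableSet_Ioi
  · rw [ae_restrict_iff' measurableSet_Ioi]
    refine ae_of_all _ fun x hx => ?_
    have hx1 : (1:ℝ) < x := hx
    have hx0 : (0:ℝ) < x := lt_trans one_pos hx1
    set t := x ^ β with htdef
    have ht1 : 1 < t := by
      calc (1:ℝ) = 1 ^ β := by simp
        _ < x ^ β := Real.rpow_lt_rpow (by norm_num) hx1 hβ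
    have htpos : 0 < t := lt_trans one_pos ht1
    have e : x ^ (-(3 * β) - 1) = 1 / (t ^ 3 * x) := by
      rw [show -(3 * β) - 1 = -(3 * β + 1) by ring, Real.rpow_neg hx0.le,
        Real.rpow_add hx0, Real.rpow_one, show 3 * β = β * ((3:ℕ):ℝ) by push_cast; ring,
        Real.rpow_mul hx0.le, Real.rpow_natCast, one_div]
    have habs : |1 - t ^ 2| ^ 3 ≤ (t ^ 2) ^ 3 := by
      apply pow_le_pow_left₀ (abs_nonneg _)
      rw [abs_le]
      constructor <;> nlinarith
    calc ‖Gfun β x‖ = 30 * |β| ^ 5 * t ^ 3 * |1 - t ^ 2| ^ 3 / (x * (1 + t ^ 2) ^ 6) :=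
          norm_Gfun_eq hx0
      _ ≤ 30 * β ^ 5 * t ^ 3 * (t ^ 2) ^ 3 / (x * (t ^ 2) ^ 6) := by
          rw [abs_of_pos hβ]
          apply div_le_div₀ (by positivity)
            (mul_le_mul_of_nonneg_left habs (by positivity)) (by positivity)
          have h6 : (t ^ 2) ^ 6 ≤ (1 + t ^ 2) ^ 6 :=
            pow_le_pow_left₀ (by positivity) (by nlinarith) 6
          nlinarith [mul_le_mul_of_nonneg_left h6 hx0.le]
      _ = 30 * β ^ 5 * x ^ (-(3 * β) - 1) := by
          rw [e]
          field_simp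
          try ring

lemma integrableOn_Gfun {β : ℝ} (hβ : 0 < β) :
    IntegrableOn (Gfun β) (Ioi 0) := by
  rw [← Ioc_union_Ioi_eq_Ioi (zero_le_one (α := ℝ))]
  exact (integrableOn_Gfun_Ioc hβ).union (integrableOn_Gfun_Ioi hβ)

end ZeroIntegralAux

/-- `R ↦ U(R) φ₀(R)²` is integrable on `(0,∞)` and its integral vanishes
(the statement `F(0,0) = 0` for the transference operator kernel). -/
theorem U_phi0_sq_integral_zero (α : ℝ) (hα : -(1 / 4 : ℝ) < α) :
    IntegrableOn (fun R => Ufun α R * (phi0 α R) ^ 2) (Set.Ioi 0) ∧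
      ∫ R in Set.Ioi (0 : ℝ), Ufun α R * (phi0 α R) ^ 2 = 0 := by
  have hβ : 0 < betaOf α := Real.sqrt_pos.2 (by linarith)
  have hEq : Set.EqOn (fun R => Ufun α R * (phi0 α R) ^ 2)
      (ZeroIntegralAux.Gfun (betaOf α)) (Set.Ioi 0) :=
    fun x hx => ZeroIntegralAux.integrand_eq hβ hx
  have hGint := ZeroIntegralAux.integrableOn_Gfun hβ
  refine ⟨hGint.congr_fun hEq.symm measurableSet_Ioi, ?_⟩
  rw [setIntegral_congr_fun measurableSet_Ioi hEq]
  have h := integral_Ioi_of_hasDerivAt_of_tendsto (f := ZeroIntegralAux.Afun (betaOf α))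
    (f' := ZeroIntegralAux.Gfun (betaOf α)) (ZeroIntegralAux.continuousWithinAt_Afun hβ)
    (fun x hx => ZeroIntegralAux.hasDerivAt_Afun hx) hGint
    (ZeroIntegralAux.tendsto_Afun hβ)
  rw [h, ZeroIntegralAux.Afun_zero hβ, sub_zero]
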